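/- For all real θ with 0 < θ < π and all positive reals a, b, with z > 0 defined by cosh²(z)·sin²(θ/2) = cosh²(a) + cosh²(b) + 2cos(θ/2)cosh(a)cosh(b), the following identity holds: arcsin(cosh(a)/cosh(z)) − arcsin(sinh(a)/sinh(z)) + arcsin(cosh(b)/cosh(z)) = θ/2 − arctan( sin(θ/2)·sinh(a) / (cos(θ/2)·cosh(a) + cosh(b)) ). -/

import Mathlib

open Real

set_option maxHeartbeats 1000000

theorem stmt_2 (θ a b z : ℝ) (hθ0 : 0 < θ) (hθπ : θ < Real.pi)
    (ha : 0 < a) (hb : 0 < b) (hz : 0 < z)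
    (hrel : Real.cosh z ^ 2 * Real.sin (θ / 2) ^ 2 =
      Real.cosh a ^ 2 + Real.cosh b ^ 2 +
        2 * Real.cos (θ / 2) * Real.cosh a * Real.cosh b) :
    Real.arcsin (Real.cosh a / Real.cosh z) - Real.arcsin (Real.sinh a / Real.sinh z) +
        Real.arcsin (Real.cosh b / Real.cosh z) =
      θ / 2 - Real.arctan (Real.sin (θ / 2) * Real.sinh a /
        (Real.cos (θ / 2) * Real.cosh a + Real.cosh b)) := by
  have hπ := Real.pi_pos
  set s := Real.sin (θ / 2) with hs
  set c := Real.cos (θ / 2) with hc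
  set A := Real.cosh a with hA
  set B := Real.cosh b with hB
  set Z := Real.cosh z with hZ
  set sA := Real.sinh a with hsA
  set S := Real.sinh z with hS
  have hspos : 0 < s := Real.sin_pos_of_pos_of_lt_pi (by linarith) (by linarith)
  have hcpos : 0 < c := Real.cos_pos_of_mem_Ioo ⟨by linarith, by linarith⟩
  have pyth : s ^ 2 + c ^ 2 = 1 := Real.sin_sq_add_cos_sq _
  have hA1 : 1 ≤ A := Real.one_le_cosh a
  have hB1 : 1 ≤ B := Real.one_le_cosh b
  have hZpos : 0 < Z := Real.cosh_pos z
  have hKpos : 0 < c * A + B := by nlinarith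
  have hLpos : 0 < c * B + A := by nlinarith
  -- key square identities
  have hKA : (c * A + B) ^ 2 = s ^ 2 * (Z ^ 2 - A ^ 2) := by
    linear_combination -hrel + A ^ 2 * pyth
  have hKB : (c * B + A) ^ 2 = s ^ 2 * (Z ^ 2 - B ^ 2) := by
    linear_combination -hrel + B ^ 2 * pyth
  have hZA : A < Z := by
    have h1 : 0 < s ^ 2 * (Z ^ 2 - A ^ 2) := hKA ▸ pow_pos hKpos 2
    have h2 : 0 < Z ^ 2 - A ^ 2 := by
      by_contra h
      push_neg at h
      nlinarith [h1, mul_nonneg (pow_pos hspos 2).le (neg_nonneg.mpr h)]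
    exact lt_of_pow_lt_pow_left₀ 2 hZpos.le (by linarith)
  have hZB : B < Z := by
    have h1 : 0 < s ^ 2 * (Z ^ 2 - B ^ 2) := hKB ▸ pow_pos hLpos 2
    have h2 : 0 < Z ^ 2 - B ^ 2 := by
      by_contra h
      push_neg at h
      nlinarith [h1, mul_nonneg (pow_pos hspos 2).le (neg_nonneg.mpr h)]
    exact lt_of_pow_lt_pow_left₀ 2 hZpos.le (by linarith)
  have haz : a < z := by
    have := Real.cosh_lt_cosh.mp hZA
    rwa [abs_of_pos ha, abs_of_pos hz] at this
  have hsApos : 0 < sA := by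
    rw [hsA, ← Real.sinh_zero]
    exact Real.sinh_lt_sinh.mpr ha
  have hSpos : 0 < S := by
    rw [hS, ← Real.sinh_zero]
    exact Real.sinh_lt_sinh.mpr hz
  have hSsA : sA < S := Real.sinh_lt_sinh.mpr haz
  have hcoshsqz : Z ^ 2 = S ^ 2 + 1 := Real.cosh_sq z
  have hcoshsqa : A ^ 2 = sA ^ 2 + 1 := Real.cosh_sq a
  -- cosines of the arcsines
  have hcosα : Real.cos (Real.arcsin (A / Z)) = (c * A + B) / (s * Z) := by
    rw [Real.cos_arcsin,
      show (1 : ℝ) - (A / Z) ^ 2 = ((c * A + B) / (s * Z)) ^ 2 by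
        field_simp
        linear_combination hrel - A ^ 2 * pyth]
    exact Real.sqrt_sq (by positivity)
  have hcosβ : Real.cos (Real.arcsin (B / Z)) = (c * B + A) / (s * Z) := by
    rw [Real.cos_arcsin,
      show (1 : ℝ) - (B / Z) ^ 2 = ((c * B + A) / (s * Z)) ^ 2 by
        field_simp
        linear_combination hrel - B ^ 2 * pyth]
    exact Real.sqrt_sq (by positivity)
  have hcosγ : Real.cos (Real.arcsin (sA / S)) = (c * A + B) / (s * S) := by
    rw [Real.cos_arcsin,
      show (1 : ℝ) - (sA / S) ^ 2 = ((c * A + B) / (s * S)) ^ 2 by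
        field_simp
        linear_combination -hKA - s ^ 2 * hcoshsqz + s ^ 2 * hcoshsqa]
    exact Real.sqrt_sq (by positivity)
  -- the arctan term equals arcsin (sA / S)
  have hm1 : (-1 : ℝ) ≤ sA / S := le_trans (by norm_num) (by positivity : (0:ℝ) ≤ sA / S)
  have hγ : Real.arctan (s * sA / (c * A + B)) = Real.arcsin (sA / S) := by
    have h1 : -(Real.pi / 2) < Real.arcsin (sA / S) :=
      Real.neg_pi_div_two_lt_arcsin.mpr (lt_of_le_of_lt (by norm_num) (by positivity : (0:ℝ) < sA / S))
    have h2 : Real.arcsin (sA / S) < Real.pi / 2 :=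
      Real.arcsin_lt_pi_div_two.mpr ((div_lt_one hSpos).mpr hSsA)
    have htan : Real.tan (Real.arcsin (sA / S)) = s * sA / (c * A + B) := by
      rw [Real.tan_eq_sin_div_cos, Real.sin_arcsin hm1 ((div_le_one hSpos).mpr hSsA.le), hcosγ]
      field_simp
    rw [← htan, Real.arctan_tan h1 h2]
  -- the two cosh-arcsines sum to θ/2
  have hsum : Real.arcsin (A / Z) + Real.arcsin (B / Z) = θ / 2 := by
    apply Real.injOn_cos
    · constructor
      · have h1 := Real.arcsin_nonneg.mpr (by positivity : (0:ℝ) ≤ A / Z)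
        have h2 := Real.arcsin_nonneg.mpr (by positivity : (0:ℝ) ≤ B / Z)
        linarith
      · linarith [Real.arcsin_le_pi_div_two (A / Z), Real.arcsin_le_pi_div_two (B / Z)]
    · exact ⟨by linarith, by linarith⟩
    · rw [Real.cos_add, hcosα, hcosβ,
        Real.sin_arcsin (le_trans (by norm_num) (by positivity : (0:ℝ) ≤ A / Z))
          ((div_le_one hZpos).mpr hZA.le),
        Real.sin_arcsin (le_trans (by norm_num) (by positivity : (0:ℝ) ≤ B / Z))
          ((div_le_one hZpos).mpr hZB.le), ← hc]
      field_simp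
      linear_combination -c * hrel - A * B * pyth
  rw [hγ]
  linarith [hsum]
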